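/- Let k be a field, G a finite group, U ⊴ G a normal p-subgroup where char k = p, and J the radical of kU regarded as a kG-submodule of kG via conjugation action on U. Then for each i ≥ 0, the natural map (Jⁱ/Jⁱ⁺¹) ⊗_k (kG/JkG) → JⁱkG/Jⁱ⁺¹kG sending (j + Jⁱ⁺¹) ⊗ (x + JkG) to jx + Jⁱ⁺¹kG is an isomorphism of kG-modules. -/

import Mathlib

open MonoidAlgebra TensorProduct

noncomputable section

variable {p : ℕ} [Fact p.Prime] (k : Type*) [Field k] [CharP k p]
  (G : Type*) [Group G] [Fintype G] (U : Subgroup G) [U.Normal]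

/-- The augmentation ideal `J = rad(kU)` of `kU`, as a `k`-submodule of `kU`. -/
def augIdeal : Submodule k (MonoidAlgebra k ↥U) :=
  Submodule.restrictScalars k (RingHom.ker ((MonoidAlgebra.lift k k ↥U) 1))

/-- The inclusion `kU → kG`. -/
def incl : MonoidAlgebra k ↥U →ₐ[k] MonoidAlgebra k G :=
  mapDomainAlgHom k k U.subtype

/-- The `k`-submodule `Jⁱ·kG` of `kG`. -/
def JiKG (i : ℕ) : Submodule k (MonoidAlgebra k G) :=
  (Submodule.map (incl k G U).toLinearMap ((augIdeal k G U) ^ i)) *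
    (⊤ : Submodule k (MonoidAlgebra k G))

/-- The `k`-module `Jⁱ/Jⁱ⁺¹`. -/
abbrev Jquot (i : ℕ) :=
  (((augIdeal k G U) ^ i : Submodule k (MonoidAlgebra k ↥U))) ⧸
    (Submodule.comap (((augIdeal k G U) ^ i : Submodule k (MonoidAlgebra k ↥U))).subtype
      ((augIdeal k G U) ^ (i + 1)))

set_option linter.unusedSectionVars false
set_option linter.unusedVariables false
set_option maxHeartbeats 2000000

namespace JenningsAux

def eps : MonoidAlgebra k ↥U →ₐ[k] k := (MonoidAlgebra.lift k k ↥U) 1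

lemma mem_augIdeal_iff (m : MonoidAlgebra k ↥U) :
    m ∈ augIdeal k G U ↔ eps k G U m = 0 := Iff.rfl

lemma eps_single (u : ↥U) (c : k) :
    eps k G U (MonoidAlgebra.single u c) = c := by
  rw [eps, MonoidAlgebra.lift_single]; simp

lemma single_mem_augIdeal (u : ↥U) :
    MonoidAlgebra.single u (1:k) - 1 ∈ augIdeal k G U := by
  rw [mem_augIdeal_iff, map_sub, map_one, eps_single k G U]
  ring

lemma single_sub_single_one_mem (u : ↥U) (c : k) :
    MonoidAlgebra.single u c - MonoidAlgebra.single 1 c ∈ augIdeal k G U := by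
  rw [mem_augIdeal_iff, map_sub, eps_single k G U, eps_single k G U]
  ring

lemma aug_mul_mem {a : MonoidAlgebra k ↥U} (ha : a ∈ augIdeal k G U)
    (b : MonoidAlgebra k ↥U) : a * b ∈ augIdeal k G U := by
  rw [mem_augIdeal_iff] at ha ⊢
  rw [map_mul, ha, zero_mul]

lemma pow_mul_mem (n : ℕ) {a : MonoidAlgebra k ↥U}
    (ha : a ∈ (augIdeal k G U) ^ (n+1)) (b : MonoidAlgebra k ↥U) :
    a * b ∈ (augIdeal k G U) ^ (n+1) := by
  rw [pow_succ] at ha ⊢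
  refine Submodule.mul_induction_on ha (fun x hx y hy => ?_) (fun x y hx hy => ?_)
  · rw [mul_assoc]
    exact Submodule.mul_mem_mul hx (aug_mul_mem k G U hy b)
  · rw [add_mul]; exact add_mem hx hy

/-- transversal of right cosets -/
def tau (g : G) : G := (Quotient.mk (QuotientGroup.rightRel U) g).out

lemma tau_spec (g : G) : g * (tau G U g)⁻¹ ∈ U := by
  have h : Quotient.mk (QuotientGroup.rightRel U) (tau G U g)
      = Quotient.mk (QuotientGroup.rightRel U) g := Quotient.out_eq _
  exact QuotientGroup.rightRel_apply.mp (Quotient.exact h)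

lemma tau_mul (v : ↥U) (g : G) : tau G U ((v:G) * g) = tau G U g := by
  unfold tau
  congr 1
  refine Quotient.sound (QuotientGroup.rightRel_apply.mpr ?_)
  have : g * ((v:G) * g)⁻¹ = (v:G)⁻¹ := by group
  rw [this]
  exact U.inv_mem v.2

def uu (g : G) : ↥U := ⟨g * (tau G U g)⁻¹, tau_spec G U g⟩

lemma uu_tau (g : G) : (uu G U g : G) * tau G U g = g := by
  simp [uu]

lemma uu_mul (v : ↥U) (g : G) : uu G U ((v:G) * g) = v * uu G U g := by
  ext
  simp [uu, tau_mul, mul_assoc]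

lemma incl_single (u : ↥U) (c : k) :
    (incl k G U) (MonoidAlgebra.single u c) = MonoidAlgebra.single (u : G) c := by
  simp [incl, MonoidAlgebra.mapDomainAlgHom_apply, Finsupp.mapDomain_single]

/-- a linear retraction onto the layer -/
lemma exists_pibar (i : ℕ) :
    ∃ π : MonoidAlgebra k ↥U →ₗ[k] Jquot k G U i,
      (∀ j : ((augIdeal k G U) ^ i : Submodule k (MonoidAlgebra k ↥U)),
          π ↑j = Submodule.Quotient.mk j) ∧
      (∀ m ∈ (augIdeal k G U) ^ (i+1), π m = 0) := by
  set Ji := (augIdeal k G U) ^ i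
  set P := (augIdeal k G U) ^ (i+1)
  let φ : Ji →ₗ[k] (MonoidAlgebra k ↥U ⧸ P) := P.mkQ ∘ₗ Ji.subtype
  have hker : LinearMap.ker φ = Submodule.comap Ji.subtype P := by
    rw [LinearMap.ker_comp, Submodule.ker_mkQ]
  let e : Jquot k G U i ≃ₗ[k] LinearMap.range φ :=
    (Submodule.quotEquivOfEq _ _ hker.symm).trans φ.quotKerEquivRange
  obtain ⟨C, hC⟩ := Submodule.exists_isCompl (LinearMap.range φ)
  refine ⟨e.symm.toLinearMap ∘ₗ
    ((LinearMap.range φ).linearProjOfIsCompl C hC) ∘ₗ P.mkQ, fun j => ?_, fun m hm => ?_⟩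
  · have h1 : P.mkQ ↑j = φ j := rfl
    have h2 : ((LinearMap.range φ).linearProjOfIsCompl C hC) (φ j)
        = ⟨φ j, LinearMap.mem_range_self φ j⟩ :=
      Submodule.linearProjOfIsCompl_apply_left hC ⟨φ j, LinearMap.mem_range_self φ j⟩
    have h3 : e (Submodule.Quotient.mk j) = ⟨φ j, LinearMap.mem_range_self φ j⟩ := by
      apply Subtype.ext
      simp only [e, LinearEquiv.trans_apply, Submodule.quotEquivOfEq_mk,
        LinearMap.quotKerEquivRange_apply_mk]
    simp only [LinearMap.comp_apply, h1, h2, ← h3, LinearEquiv.coe_toLinearMap,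
      LinearEquiv.symm_apply_apply]
  · have h1 : P.mkQ m = 0 := (Submodule.Quotient.mk_eq_zero P).mpr hm
    simp only [LinearMap.comp_apply, h1, map_zero]

end JenningsAux

open JenningsAux

/-- For each `i ≥ 0` the natural map
`(Jⁱ/Jⁱ⁺¹) ⊗_k (kG/JkG) → JⁱkG/Jⁱ⁺¹kG`, `(j + Jⁱ⁺¹) ⊗ (x + JkG) ↦ jx + Jⁱ⁺¹kG`,
is an isomorphism of `kG`-modules.  We formalize `JⁱkG/Jⁱ⁺¹kG` as the image of `JⁱkG`
in `kG/Jⁱ⁺¹kG`: there is a `k`-linear map `f` with `f((j+Jⁱ⁺¹) ⊗ (x+JkG)) = jx + Jⁱ⁺¹kG`,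
which is injective with range `JⁱkG/Jⁱ⁺¹kG`, and which is `G`-equivariant for the
conjugation action on `Jⁱ/Jⁱ⁺¹` and left multiplication elsewhere (so it is an
isomorphism of `kG`-modules onto `JⁱkG/Jⁱ⁺¹kG`). -/
theorem jennings_layer_iso (hU : IsPGroup p U) (i : ℕ) :
    ∃ f : (Jquot k G U i) ⊗[k] (MonoidAlgebra k G ⧸ JiKG k G U 1)
        →ₗ[k] (MonoidAlgebra k G ⧸ JiKG k G U (i + 1)),
      (∀ (j : ((augIdeal k G U) ^ i : Submodule k (MonoidAlgebra k ↥U)))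
          (x : MonoidAlgebra k G),
          f (Submodule.Quotient.mk j ⊗ₜ Submodule.Quotient.mk x)
            = Submodule.Quotient.mk ((incl k G U) ↑j * x)) ∧
      Function.Injective f ∧
      LinearMap.range f = Submodule.map (JiKG k G U (i + 1)).mkQ (JiKG k G U i) ∧
      (∀ (g : G) (j jc : ((augIdeal k G U) ^ i : Submodule k (MonoidAlgebra k ↥U)))
          (x : MonoidAlgebra k G),
          (incl k G U) ↑jc
              = (MonoidAlgebra.of k G g) * (incl k G U) ↑j * (MonoidAlgebra.of k G g⁻¹) →
          f (Submodule.Quotient.mk jc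
              ⊗ₜ Submodule.Quotient.mk ((MonoidAlgebra.of k G g) * x))
            = Submodule.Quotient.mk ((MonoidAlgebra.of k G g) * ((incl k G U) ↑j * x))) := by
  classical
  set J := augIdeal k G U with hJdef
  -- generic membership fact
  have hmemJiKG : ∀ (n : ℕ) {m : MonoidAlgebra k ↥U}, m ∈ J ^ n →
      ∀ x : MonoidAlgebra k G, (incl k G U) m * x ∈ JiKG k G U n := by
    intro n m hm x
    exact Submodule.mul_mem_mul (Submodule.mem_map_of_mem hm) trivial
  -- construction of f
  let C : MonoidAlgebra k G →ₗ[k] MonoidAlgebra k G →ₗ[k]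
      (MonoidAlgebra k G ⧸ JiKG k G U (i+1)) :=
    (LinearMap.mul k (MonoidAlgebra k G)).compr₂ (JiKG k G U (i+1)).mkQ
  let B : ((J ^ i : Submodule k (MonoidAlgebra k ↥U))) →ₗ[k]
      MonoidAlgebra k G →ₗ[k] (MonoidAlgebra k G ⧸ JiKG k G U (i+1)) :=
    C ∘ₗ (incl k G U).toLinearMap ∘ₗ (J ^ i).subtype
  have hBapp : ∀ (j : ((J ^ i : Submodule k (MonoidAlgebra k ↥U)))) (x : MonoidAlgebra k G),
      B j x = Submodule.Quotient.mk ((incl k G U) ↑j * x) := fun j x => rfl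
  have hB1 : Submodule.comap (J ^ i).subtype (J ^ (i+1)) ≤ LinearMap.ker B := by
    intro j hj
    rw [LinearMap.mem_ker]
    refine LinearMap.ext fun x => ?_
    rw [hBapp, LinearMap.zero_apply]
    exact (Submodule.Quotient.mk_eq_zero _).mpr (hmemJiKG (i+1) hj x)
  let B1 : Jquot k G U i →ₗ[k] MonoidAlgebra k G →ₗ[k]
      (MonoidAlgebra k G ⧸ JiKG k G U (i+1)) := Submodule.liftQ _ B hB1
  have hB1app : ∀ (j : ((J ^ i : Submodule k (MonoidAlgebra k ↥U)))) (x : MonoidAlgebra k G),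
      B1 (Submodule.Quotient.mk j) x = Submodule.Quotient.mk ((incl k G U) ↑j * x) := by
    intro j x
    have : B1 (Submodule.Quotient.mk j) = B j := Submodule.liftQ_apply _ B j
    rw [this, hBapp]
  have key2 : ∀ (j : ((J ^ i : Submodule k (MonoidAlgebra k ↥U)))) {x : MonoidAlgebra k G},
      x ∈ JiKG k G U 1 → (incl k G U) ↑j * x ∈ JiKG k G U (i+1) := by
    intro j x hx
    have hle : JiKG k G U 1 ≤
        Submodule.comap (LinearMap.mulLeft k ((incl k G U) ↑j)) (JiKG k G U (i+1)) := by
      rw [JiKG]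
      refine Submodule.mul_le.mpr ?_
      rintro a ⟨m, hm, rfl⟩ b -
      simp only [Submodule.mem_comap, LinearMap.mulLeft_apply, AlgHom.toLinearMap_apply]
      rw [← mul_assoc, ← map_mul]
      refine hmemJiKG (i+1) ?_ b
      rw [pow_succ]
      exact Submodule.mul_mem_mul j.2 (by rwa [pow_one] at hm)
    exact hle hx
  have hB2 : JiKG k G U 1 ≤ LinearMap.ker B1.flip := by
    intro x hx
    rw [LinearMap.mem_ker]
    refine LinearMap.ext fun a => ?_
    obtain ⟨j, rfl⟩ := Submodule.Quotient.mk_surjective _ a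
    rw [LinearMap.flip_apply, LinearMap.zero_apply, hB1app]
    exact (Submodule.Quotient.mk_eq_zero _).mpr (key2 j hx)
  let D := Submodule.liftQ (JiKG k G U 1) B1.flip hB2
  let f := TensorProduct.lift D.flip
  have hf : ∀ (j : ((J ^ i : Submodule k (MonoidAlgebra k ↥U)))) (x : MonoidAlgebra k G),
      f (Submodule.Quotient.mk j ⊗ₜ Submodule.Quotient.mk x)
        = Submodule.Quotient.mk ((incl k G U) ↑j * x) := by
    intro j x
    have h1 : f (Submodule.Quotient.mk j ⊗ₜ Submodule.Quotient.mk x)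
        = D (Submodule.Quotient.mk x) (Submodule.Quotient.mk j) := rfl
    rw [h1, Submodule.liftQ_apply, LinearMap.flip_apply, hB1app]
  -- the retraction θ
  obtain ⟨π, hπ1, hπ2⟩ := exists_pibar k G U i
  set W := MonoidAlgebra k G ⧸ JiKG k G U 1 with hWdef
  let vec : G → (Jquot k G U i) ⊗[k] W := fun g =>
    π (MonoidAlgebra.single (uu G U g) 1) ⊗ₜ
      Submodule.Quotient.mk (MonoidAlgebra.single (tau G U g) 1)
  let θ : MonoidAlgebra k G →ₗ[k] (Jquot k G U i) ⊗[k] W :=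
    (Finsupp.lsum k fun g => LinearMap.toSpanSingleton k _ (vec g)) ∘ₗ
      (MonoidAlgebra.coeffLinearEquiv k).toLinearMap
  have hθs : ∀ (g : G) (c : k), θ (MonoidAlgebra.single g c) = c • vec g := by
    intro g c
    exact (Finsupp.lsum_single k _ g c).trans (LinearMap.toSpanSingleton_apply k _ _ c)
  have H : ∀ (m : MonoidAlgebra k ↥U) (g : G) (c : k),
      θ ((incl k G U) m * MonoidAlgebra.single g c)
        = c • (π (m * MonoidAlgebra.single (uu G U g) 1) ⊗ₜ
            (Submodule.Quotient.mk (MonoidAlgebra.single (tau G U g) 1) : W)) := by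
    intro m g c
    induction m using MonoidAlgebra.induction_linear with
    | zero =>
      rw [map_zero, zero_mul, map_zero, zero_mul, map_zero, zero_tmul, smul_zero]
    | add a b ha hb =>
      rw [map_add, add_mul, map_add, ha, hb, add_mul, map_add, add_tmul, smul_add]
    | single v d =>
      rw [incl_single, MonoidAlgebra.single_mul_single, hθs]
      have h1 : MonoidAlgebra.single v d * MonoidAlgebra.single (uu G U g) (1:k)
          = d • MonoidAlgebra.single (v * uu G U g) (1:k) := by
        rw [MonoidAlgebra.single_mul_single, mul_one, MonoidAlgebra.smul_single', mul_one]
      have h2 : vec ((v:G) * g) = π (MonoidAlgebra.single (v * uu G U g) 1) ⊗ₜ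
          Submodule.Quotient.mk (MonoidAlgebra.single (tau G U g) 1) := by
        simp only [vec, uu_mul, tau_mul]
      rw [h1, map_smul, ← smul_tmul', smul_smul, h2, mul_comm c d]
  have S1 : ∀ (j : ((J ^ i : Submodule k (MonoidAlgebra k ↥U)))) (x : MonoidAlgebra k G),
      θ ((incl k G U) ↑j * x)
        = Submodule.Quotient.mk j ⊗ₜ (Submodule.Quotient.mk x : W) := by
    intro j x
    induction x using MonoidAlgebra.induction_linear with
    | zero =>
      have : (Submodule.Quotient.mk (0 : MonoidAlgebra k G) : W) = 0 := rfl
      rw [mul_zero, map_zero, this, tmul_zero]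
    | add a b ha hb =>
      have : (Submodule.Quotient.mk (a + b : MonoidAlgebra k G) : W)
          = Submodule.Quotient.mk a + Submodule.Quotient.mk b := rfl
      rw [mul_add, map_add, ha, hb, this, tmul_add]
    | single g c =>
      rw [H]
      have hA : π (j.1 * MonoidAlgebra.single (uu G U g) 1) = Submodule.Quotient.mk j := by
        have hd : j.1 * MonoidAlgebra.single (uu G U g) (1:k)
            = j.1 + j.1 * (MonoidAlgebra.single (uu G U g) (1:k) - 1) := by
          rw [mul_sub, mul_one]; abel
        have hmem : j.1 * (MonoidAlgebra.single (uu G U g) (1:k) - 1)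
            ∈ J ^ (i+1) := by
          rw [pow_succ]
          exact Submodule.mul_mem_mul j.2 (single_mem_augIdeal k G U (uu G U g))
        rw [hd, map_add, hπ1 j, hπ2 _ hmem, add_zero]
      have hB : (Submodule.Quotient.mk (MonoidAlgebra.single g c) : W)
          = c • Submodule.Quotient.mk (MonoidAlgebra.single (tau G U g) 1) := by
        rw [← Submodule.Quotient.mk_smul]
        refine (Submodule.Quotient.eq _).mpr ?_
        have hx : MonoidAlgebra.single g c - c • MonoidAlgebra.single (tau G U g) (1:k)
            = (incl k G U) (MonoidAlgebra.single (uu G U g) c - MonoidAlgebra.single 1 c)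
              * MonoidAlgebra.single (tau G U g) 1 := by
          simp only [map_sub, incl_single, sub_mul, MonoidAlgebra.single_mul_single,
            MonoidAlgebra.smul_single', mul_one, one_mul, uu_tau, OneMemClass.coe_one]
        rw [hx]
        refine hmemJiKG 1 ?_ _
        rw [pow_one]
        exact single_sub_single_one_mem k G U (uu G U g) c
      rw [hA, hB, tmul_smul]
  have S2 : ∀ m ∈ J ^ (i+1), ∀ (x : MonoidAlgebra k G), θ ((incl k G U) m * x) = 0 := by
    intro m hm x
    induction x using MonoidAlgebra.induction_linear with
    | zero => rw [mul_zero, map_zero]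
    | add a b ha hb => rw [mul_add, map_add, ha, hb, add_zero]
    | single g c =>
      rw [H, hπ2 _ (pow_mul_mem k G U i hm _), zero_tmul, smul_zero]
  have hkerθ : JiKG k G U (i+1) ≤ LinearMap.ker θ := by
    rw [JiKG]
    refine Submodule.mul_le.mpr ?_
    rintro a ⟨m, hm, rfl⟩ b -
    exact LinearMap.mem_ker.mpr (S2 m hm b)
  let θbar := Submodule.liftQ _ θ hkerθ
  have hleft : ∀ t, θbar (f t) = t := by
    intro t
    induction t using TensorProduct.induction_on with
    | zero => rw [map_zero, map_zero]
    | tmul a b =>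
      obtain ⟨j, rfl⟩ := Submodule.Quotient.mk_surjective _ a
      obtain ⟨x, rfl⟩ := Submodule.Quotient.mk_surjective _ b
      rw [hf, Submodule.liftQ_apply]
      exact S1 j x
    | add s t hs ht => rw [map_add, map_add, hs, ht]
  refine ⟨f, hf, Function.LeftInverse.injective hleft, ?_, ?_⟩
  · -- range
    apply le_antisymm
    · rintro y ⟨t, rfl⟩
      induction t using TensorProduct.induction_on with
      | zero => rw [map_zero]; exact Submodule.zero_mem _
      | tmul a b =>
        obtain ⟨j, rfl⟩ := Submodule.Quotient.mk_surjective _ a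
        obtain ⟨x, rfl⟩ := Submodule.Quotient.mk_surjective _ b
        rw [hf]
        exact Submodule.mem_map.mpr ⟨_, hmemJiKG i j.2 x, rfl⟩
      | add s t hs ht => rw [map_add]; exact Submodule.add_mem _ hs ht
    · rintro y ⟨w, hw, rfl⟩
      have hle : JiKG k G U i ≤
          Submodule.comap (JiKG k G U (i+1)).mkQ (LinearMap.range f) := by
        conv_lhs => rw [JiKG]
        refine Submodule.mul_le.mpr ?_
        rintro a ⟨m, hm, rfl⟩ b -
        refine Submodule.mem_comap.mpr ?_
        exact LinearMap.mem_range.mpr ⟨Submodule.Quotient.mk ⟨m, hm⟩ ⊗ₜ Submodule.Quotient.mk b,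
          hf ⟨m, hm⟩ b⟩
      exact Submodule.mem_comap.mp (hle hw)
  · -- equivariance
    intro g j jc x h
    rw [hf, h]
    have hc : (MonoidAlgebra.of k G g⁻¹) * ((MonoidAlgebra.of k G g) * x) = x := by
      rw [← mul_assoc, ← map_mul, inv_mul_cancel, map_one, one_mul]
    congr 1
    simp only [mul_assoc]
    rw [hc]

end
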